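/- Let A, Y, Z be compact Hausdorff spaces with Y, Z nonempty, and define α, β: A × (Y*Z) × I → A*Y*Z by α(a, [sy,(1−s)z], t) = [st·a, s(1−t)·y, (1−s)·z] and β(a, [sy,(1−s)z], t) = [t·a, s(1−t)·y, (1−s)(1−t)·z]. Then α and β are well-defined continuous maps and are homotopic. -/

import Mathlib

noncomputable section

namespace Paper

open unitInterval

section JoinModels

variable (Y Z : Type*) [TopologicalSpace Y] [TopologicalSpace Z]

/-- The defining relation of the (binary) join as a quotient of `Y × Z × I`:
`[s·y, (1-s)·z]` forgets `y` when `s = 0` and forgets `z` when `s = 1`. -/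
def Join2Rel (a b : Y × Z × unitInterval) : Prop :=
  a.2.2 = b.2.2 ∧ (a.2.2 ≠ 0 → a.1 = b.1) ∧ (a.2.2 ≠ 1 → a.2.1 = b.2.1)

/-- The join `Y * Z` of two (nonempty, compact Hausdorff) spaces. -/
def Join2 := Quot (Join2Rel Y Z)

instance : TopologicalSpace (Join2 Y Z) := inferInstanceAs (TopologicalSpace (Quot _))

variable {Y Z}

/-- The point `[s·y, (1-s)·z]` of the join. -/
def Join2.mk (y : Y) (z : Z) (s : unitInterval) : Join2 Y Z := Quot.mk _ (y, z, s)

variable (A : Type*) [TopologicalSpace A]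

/-- The standard 2-simplex, as a subtype of `ℝ³`. -/
def Delta2 : Type := {p : ℝ × ℝ × ℝ // 0 ≤ p.1 ∧ 0 ≤ p.2.1 ∧ 0 ≤ p.2.2 ∧ p.1 + p.2.1 + p.2.2 = 1}

instance : TopologicalSpace Delta2 := inferInstanceAs (TopologicalSpace {_p : ℝ × ℝ × ℝ // _})

/-- The defining relation of the threefold join `A * Y * Z` as a quotient of
`A × Y × Z × Δ²`: the `i`-th coordinate is forgotten where the `i`-th barycentric
coordinate vanishes. -/
def Join3Rel (A Y Z : Type*) (a b : A × Y × Z × Delta2) : Prop :=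
  a.2.2.2 = b.2.2.2 ∧ (a.2.2.2.1.1 ≠ 0 → a.1 = b.1) ∧
    (a.2.2.2.1.2.1 ≠ 0 → a.2.1 = b.2.1) ∧ (a.2.2.2.1.2.2 ≠ 0 → a.2.2.1 = b.2.2.1)

/-- The threefold join `A * Y * Z`. -/
def Join3 (A Y Z : Type*) := Quot (Join3Rel A Y Z)

instance (A Y Z : Type*) [TopologicalSpace A] [TopologicalSpace Y] [TopologicalSpace Z] :
    TopologicalSpace (Join3 A Y Z) :=
  inferInstanceAs (TopologicalSpace (Quot _))

variable {A}

/-- The point `[t₀·a, t₁·y, t₂·z]` of the threefold join. -/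
def Join3.mk (a : A) (y : Y) (z : Z) (p : Delta2) : Join3 A Y Z := Quot.mk _ (a, y, z, p)

/-- The barycentric coordinates `(st, s(1-t), 1-s)` of the map `α`. -/
def alphaCoords (s t : unitInterval) : Delta2 :=
  ⟨((s : ℝ) * t, (s : ℝ) * (1 - (t : ℝ)), 1 - (s : ℝ)),
    mul_nonneg s.2.1 t.2.1, mul_nonneg s.2.1 (sub_nonneg.mpr t.2.2),
    sub_nonneg.mpr s.2.2, by ring⟩

/-- The barycentric coordinates `(t, s(1-t), (1-s)(1-t))` of the map `β`. -/
def betaCoords (s t : unitInterval) : Delta2 :=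
  ⟨((t : ℝ), (s : ℝ) * (1 - (t : ℝ)), (1 - (s : ℝ)) * (1 - (t : ℝ))),
    t.2.1, mul_nonneg s.2.1 (sub_nonneg.mpr t.2.2),
    mul_nonneg (sub_nonneg.mpr s.2.2) (sub_nonneg.mpr t.2.2), by ring⟩

end JoinModels

end Paper


namespace Paper

section Aux

variable {Y Z : Type*} [TopologicalSpace Y] [TopologicalSpace Z]

lemma unitInterval_zero_ne_one : (0 : unitInterval) ≠ 1 := fun h => by
  simpa using congrArg Subtype.val h

lemma join2Rel_equivalence : Equivalence (Join2Rel Y Z) := by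
  constructor
  · intro a; exact ⟨rfl, fun _ => rfl, fun _ => rfl⟩
  · rintro a b ⟨h, h0, h1⟩
    refine ⟨h.symm, fun hb => (h0 (h ▸ hb)).symm, fun hb => (h1 (h ▸ hb)).symm⟩
  · rintro a b c ⟨h, h0, h1⟩ ⟨h', h0', h1'⟩
    exact ⟨h.trans h', fun ha => (h0 ha).trans (h0' (h ▸ ha)),
      fun ha => (h1 ha).trans (h1' (h ▸ ha))⟩

lemma join2_mk_eq_iff {a b : Y × Z × unitInterval} :
    Quot.mk (Join2Rel Y Z) a = Quot.mk (Join2Rel Y Z) b ↔ Join2Rel Y Z a b := by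
  rw [Quot.eq]
  exact join2Rel_equivalence.eqvGen_iff

variable [CompactSpace Y] [CompactSpace Z] [T2Space Y] [T2Space Z]

lemma sat_isClosed {C : Set (Y × Z × unitInterval)} (hC : IsClosed C) :
    IsClosed (Quot.mk (Join2Rel Y Z) ⁻¹' (Quot.mk (Join2Rel Y Z) '' C)) := by
  have h0 : IsClosed {p : Y × Z × unitInterval | p.2.2 = 0} :=
    isClosed_singleton.preimage (by fun_prop : Continuous fun p : Y × Z × unitInterval => p.2.2)
  have h1 : IsClosed {p : Y × Z × unitInterval | p.2.2 = 1} :=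
    isClosed_singleton.preimage (by fun_prop : Continuous fun p : Y × Z × unitInterval => p.2.2)
  have hset : Quot.mk (Join2Rel Y Z) ⁻¹' (Quot.mk (Join2Rel Y Z) '' C) =
      C ∪ ({p : Y × Z × unitInterval | p.2.2 = 0} ∩
            ((fun p : Y × Z × unitInterval => p.2.1) ⁻¹'
              ((fun p : Y × Z × unitInterval => p.2.1) '' (C ∩ {p | p.2.2 = 0}))))
        ∪ ({p : Y × Z × unitInterval | p.2.2 = 1} ∩
            ((fun p : Y × Z × unitInterval => p.1) ⁻¹'
              ((fun p : Y × Z × unitInterval => p.1) '' (C ∩ {p | p.2.2 = 1})))) := by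
    ext x
    simp only [Set.mem_preimage, Set.mem_image, Set.mem_union, Set.mem_inter_iff,
      Set.mem_setOf_eq]
    constructor
    · rintro ⟨c, hc, hceq⟩
      rw [join2_mk_eq_iff] at hceq
      obtain ⟨hs, hy, hz⟩ := hceq
      by_cases hx0 : x.2.2 = 0
      · refine Or.inl (Or.inr ⟨hx0, c, ⟨hc, hs.trans hx0⟩, ?_⟩)
        exact hz (fun h => unitInterval_zero_ne_one ((hs.trans hx0).symm.trans h))
      · by_cases hx1 : x.2.2 = 1
        · refine Or.inr ⟨hx1, c, ⟨hc, hs.trans hx1⟩, ?_⟩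
          exact hy (fun h => unitInterval_zero_ne_one (h.symm.trans (hs.trans hx1)))
        · left; left
          have hcx : c = x := by
            have e1 : c.1 = x.1 := hy (fun h => hx0 (hs.symm.trans h ▸ hs.symm ▸ (hs ▸ rfl)))
            have e1' : c.1 = x.1 := hy (fun h => hx0 (hs ▸ h))
            have e2 : c.2.1 = x.2.1 := hz (fun h => hx1 (hs ▸ h))
            exact Prod.ext e1' (Prod.ext e2 hs)
          exact hcx ▸ hc
    · rintro ((hx | ⟨hx0, c, ⟨hc, hc0⟩, hcz⟩) | ⟨hx1, c, ⟨hc, hc1⟩, hcy⟩)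
      · exact ⟨x, hx, rfl⟩
      · refine ⟨c, hc, join2_mk_eq_iff.mpr ⟨hc0.trans hx0.symm, ?_, fun _ => hcz⟩⟩
        exact fun h => absurd hc0 h
      · refine ⟨c, hc, join2_mk_eq_iff.mpr ⟨hc1.trans hx1.symm, fun _ => hcy, ?_⟩⟩
        exact fun h => absurd hc1 (fun e => h (e ▸ rfl))
  rw [hset]
  have k0 : IsClosed ((fun p : Y × Z × unitInterval => p.2.1) ''
      (C ∩ {p | p.2.2 = 0})) :=
    (((hC.inter h0).isCompact).image (by fun_prop)).isClosed
  have k1 : IsClosed ((fun p : Y × Z × unitInterval => p.1) ''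
      (C ∩ {p | p.2.2 = 1})) :=
    (((hC.inter h1).isCompact).image (by fun_prop)).isClosed
  exact ((hC.union (h0.inter (k0.preimage (by fun_prop)))).union
    (h1.inter (k1.preimage (by fun_prop))))

lemma q2_proper :
    IsProperMap (Quot.mk (Join2Rel Y Z) : Y × Z × unitInterval → Join2 Y Z) := by
  rw [isProperMap_iff_isClosedMap_and_compact_fibers]
  refine ⟨continuous_quot_mk, ?_, ?_⟩
  · intro C hC
    have hq : Topology.IsQuotientMap (Quot.mk (Join2Rel Y Z)) :=
      isQuotientMap_quot_mk
    rw [← hq.isClosed_preimage]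
    exact sat_isClosed hC
  · intro j
    obtain ⟨x, rfl⟩ := Quot.mk_surjective (r := Join2Rel Y Z) j
    have : Quot.mk (Join2Rel Y Z) ⁻¹' {Quot.mk (Join2Rel Y Z) x}
        = Quot.mk (Join2Rel Y Z) ⁻¹' (Quot.mk (Join2Rel Y Z) '' {x}) := by
      rw [Set.image_singleton]
    rw [this]
    exact (sat_isClosed isClosed_singleton).isCompact

variable {A : Type*} [TopologicalSpace A]

lemma q_quotient :
    Topology.IsQuotientMap (Prod.map (id : A → A)
      (Prod.map (Quot.mk (Join2Rel Y Z)) (id : unitInterval → unitInterval))) := by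
  refine IsClosedMap.isQuotientMap ?_ ?_ ?_
  · exact (isProperMap_id.prodMap (q2_proper.prodMap isProperMap_id)).isClosedMap
  · exact continuous_id.prodMap (continuous_quot_mk.prodMap continuous_id)
  · exact Function.surjective_id.prodMap
      ((Quot.mk_surjective (r := Join2Rel Y Z)).prodMap Function.surjective_id)

lemma lift_aux (φ : unitInterval × unitInterval → Delta2) (hφ : Continuous φ)
    (h2 : ∀ s t : unitInterval, (φ (s, t)).1.2.1 ≠ 0 → s ≠ 0)
    (h3 : ∀ s t : unitInterval, (φ (s, t)).1.2.2 ≠ 0 → s ≠ 1) :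
    ∃ g : C(A × Join2 Y Z × unitInterval, Join3 A Y Z),
      ∀ (a : A) (y : Y) (z : Z) (s t : unitInterval),
        g (a, Join2.mk y z s, t) = Join3.mk a y z (φ (s, t)) := by
  have wd : ∀ (a : A) (t : unitInterval) (p q : Y × Z × unitInterval),
      Join2Rel Y Z p q →
      Quot.mk (Join3Rel A Y Z) (a, p.1, p.2.1, φ (p.2.2, t))
        = Quot.mk (Join3Rel A Y Z) (a, q.1, q.2.1, φ (q.2.2, t)) := by
    rintro a t p q ⟨hs, hy, hz⟩
    apply Quot.sound
    refine ⟨by rw [hs], fun _ => rfl, fun h => hy (h2 _ _ h), fun h => hz (h3 _ _ h)⟩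
  refine ⟨⟨fun x => Quot.liftOn x.2.1
      (fun p => Quot.mk (Join3Rel A Y Z) (x.1, p.1, p.2.1, φ (p.2.2, x.2.2)))
      (wd x.1 x.2.2), ?_⟩, fun a y z s t => rfl⟩
  refine q_quotient.continuous_iff.mpr ?_
  show Continuous fun x : A × (Y × Z × unitInterval) × unitInterval =>
    Quot.mk (Join3Rel A Y Z) (x.1, x.2.1.1, x.2.1.2.1, φ (x.2.1.2.2, x.2.2))
  refine continuous_quot_mk.comp ?_
  have h4 : Continuous fun x : A × (Y × Z × unitInterval) × unitInterval =>
      φ (x.2.1.2.2, x.2.2) := hφ.comp (by fun_prop)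
  exact continuous_fst.prodMk ((by fun_prop :
      Continuous fun x : A × (Y × Z × unitInterval) × unitInterval => x.2.1.1).prodMk
    ((by fun_prop :
      Continuous fun x : A × (Y × Z × unitInterval) × unitInterval => x.2.1.2.1).prodMk h4))

/-- The straight-line homotopy coordinates between `alphaCoords` and `betaCoords`. -/
def homCoords (u s t : unitInterval) : Delta2 :=
  ⟨((1 - (u : ℝ)) * ((s : ℝ) * t) + (u : ℝ) * t,
    (s : ℝ) * (1 - (t : ℝ)),
    (1 - (u : ℝ)) * (1 - (s : ℝ)) + (u : ℝ) * ((1 - (s : ℝ)) * (1 - (t : ℝ)))),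
    add_nonneg (mul_nonneg (sub_nonneg.mpr u.2.2) (mul_nonneg s.2.1 t.2.1))
      (mul_nonneg u.2.1 t.2.1),
    mul_nonneg s.2.1 (sub_nonneg.mpr t.2.2),
    add_nonneg (mul_nonneg (sub_nonneg.mpr u.2.2) (sub_nonneg.mpr s.2.2))
      (mul_nonneg u.2.1 (mul_nonneg (sub_nonneg.mpr s.2.2) (sub_nonneg.mpr t.2.2))),
    by ring⟩

lemma homCoords_continuous :
    Continuous (fun x : unitInterval × unitInterval × unitInterval =>
      homCoords x.1 x.2.1 x.2.2) := by
  apply Continuous.subtype_mk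
  fun_prop

lemma homCoords_zero (s t : unitInterval) : homCoords 0 s t = alphaCoords s t := by
  apply Subtype.ext
  simp only [homCoords, alphaCoords, Set.Icc.coe_zero]
  refine Prod.ext (by ring) (Prod.ext (by ring) (by ring))

lemma homCoords_one (s t : unitInterval) : homCoords 1 s t = betaCoords s t := by
  apply Subtype.ext
  simp only [homCoords, betaCoords, Set.Icc.coe_one]
  refine Prod.ext (by ring) (Prod.ext (by ring) (by ring))

lemma homCoords_ne2 (u s t : unitInterval) (h : (homCoords u s t).1.2.1 ≠ 0) : s ≠ 0 := by
  rintro rfl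
  exact h (by simp [homCoords])

lemma homCoords_ne3 (u s t : unitInterval) (h : (homCoords u s t).1.2.2 ≠ 0) : s ≠ 1 := by
  rintro rfl
  exact h (by simp [homCoords])

end Aux

end Paper

open Paper unitInterval

/-- Let `A, Y, Z` be compact Hausdorff spaces with `Y, Z` nonempty.
The maps `α, β : A × (Y*Z) × I → A*Y*Z` given by
`α(a, [sy,(1-s)z], t) = [st·a, s(1-t)·y, (1-s)·z]` and
`β(a, [sy,(1-s)z], t) = [t·a, s(1-t)·y, (1-s)(1-t)·z]`
are well-defined continuous maps and are homotopic. -/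
theorem alpha_beta_welldefined_and_homotopic
    (A Y Z : Type*) [TopologicalSpace A] [TopologicalSpace Y] [TopologicalSpace Z]
    [CompactSpace A] [CompactSpace Y] [CompactSpace Z]
    [T2Space A] [T2Space Y] [T2Space Z]
    [Nonempty Y] [Nonempty Z] :
    ∃ α β : C(A × Join2 Y Z × unitInterval, Join3 A Y Z),
      (∀ (a : A) (y : Y) (z : Z) (s t : unitInterval),
        α (a, Join2.mk y z s, t) = Join3.mk a y z (alphaCoords s t)) ∧
      (∀ (a : A) (y : Y) (z : Z) (s t : unitInterval),
        β (a, Join2.mk y z s, t) = Join3.mk a y z (betaCoords s t)) ∧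
      Nonempty (α.Homotopy β) := by
  obtain ⟨α, hα⟩ := lift_aux (A := A) (Y := Y) (Z := Z)
    (fun p => alphaCoords p.1 p.2)
    (by apply Continuous.subtype_mk; fun_prop)
    (fun s t h => fun hs => h (by simp [alphaCoords, hs]))
    (fun s t h => fun hs => h (by simp [alphaCoords, hs]))
  obtain ⟨β, hβ⟩ := lift_aux (A := A) (Y := Y) (Z := Z)
    (fun p => betaCoords p.1 p.2)
    (by apply Continuous.subtype_mk; fun_prop)
    (fun s t h => fun hs => h (by simp [betaCoords, hs]))
    (fun s t h => fun hs => h (by simp [betaCoords, hs]))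
  refine ⟨α, β, fun a y z s t => hα a y z s t, fun a y z s t => hβ a y z s t, ?_⟩
  -- build the homotopy
  have wd : ∀ (u : unitInterval) (a : A) (t : unitInterval) (p q : Y × Z × unitInterval),
      Join2Rel Y Z p q →
      Quot.mk (Join3Rel A Y Z) (a, p.1, p.2.1, homCoords u p.2.2 t)
        = Quot.mk (Join3Rel A Y Z) (a, q.1, q.2.1, homCoords u q.2.2 t) := by
    rintro u a t p q ⟨hs, hy, hz⟩
    apply Quot.sound
    exact ⟨by rw [hs], fun _ => rfl, fun h => hy (homCoords_ne2 _ _ _ h),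
      fun h => hz (homCoords_ne3 _ _ _ h)⟩
  have hQ : Topology.IsQuotientMap (Prod.map (id : unitInterval → unitInterval)
      (Prod.map (id : A → A)
        (Prod.map (Quot.mk (Join2Rel Y Z)) (id : unitInterval → unitInterval)))) := by
    refine IsClosedMap.isQuotientMap ?_ ?_ ?_
    · exact (isProperMap_id.prodMap (isProperMap_id.prodMap
        (q2_proper.prodMap isProperMap_id))).isClosedMap
    · exact continuous_id.prodMap (continuous_id.prodMap
        (continuous_quot_mk.prodMap continuous_id))
    · exact Function.surjective_id.prodMap (Function.surjective_id.prodMap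
        ((Quot.mk_surjective (r := Join2Rel Y Z)).prodMap Function.surjective_id))
  have hcont : Continuous (fun x : unitInterval × (A × Join2 Y Z × unitInterval) =>
      Quot.liftOn x.2.2.1
        (fun p => Quot.mk (Join3Rel A Y Z) (x.2.1, p.1, p.2.1, homCoords x.1 p.2.2 x.2.2.2))
        (wd x.1 x.2.1 x.2.2.2)) := by
    refine hQ.continuous_iff.mpr ?_
    show Continuous fun x : unitInterval × (A × (Y × Z × unitInterval) × unitInterval) =>
      Quot.mk (Join3Rel A Y Z) (x.2.1, x.2.2.1.1, x.2.2.1.2.1, homCoords x.1 x.2.2.1.2.2 x.2.2.2)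
    refine continuous_quot_mk.comp ?_
    have h4 : Continuous
        fun x : unitInterval × (A × (Y × Z × unitInterval) × unitInterval) =>
          homCoords x.1 x.2.2.1.2.2 x.2.2.2 := by
      exact homCoords_continuous.comp ((by fun_prop : Continuous fun
        x : unitInterval × (A × (Y × Z × unitInterval) × unitInterval) =>
          (x.1, x.2.2.1.2.2, x.2.2.2)))
    exact (by fun_prop : Continuous fun
        x : unitInterval × (A × (Y × Z × unitInterval) × unitInterval) => x.2.1).prodMk
      ((by fun_prop : Continuous fun
        x : unitInterval × (A × (Y × Z × unitInterval) × unitInterval) => x.2.2.1.1).prodMk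
      ((by fun_prop : Continuous fun
        x : unitInterval × (A × (Y × Z × unitInterval) × unitInterval) => x.2.2.1.2.1).prodMk
        h4))
  refine ⟨⟨⟨_, hcont⟩, ?_, ?_⟩⟩
  · rintro ⟨a, j, t⟩
    obtain ⟨p, rfl⟩ := Quot.mk_surjective (r := Join2Rel Y Z) j
    show Quot.mk (Join3Rel A Y Z) (a, p.1, p.2.1, homCoords 0 p.2.2 t) = _
    rw [homCoords_zero]
    exact (hα a p.1 p.2.1 p.2.2 t).symm
  · rintro ⟨a, j, t⟩
    obtain ⟨p, rfl⟩ := Quot.mk_surjective (r := Join2Rel Y Z) j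
    show Quot.mk (Join3Rel A Y Z) (a, p.1, p.2.1, homCoords 1 p.2.2 t) = _
    rw [homCoords_one]
    exact (hβ a p.1 p.2.1 p.2.2 t).symm
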